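/- arXiv:2212.04879 — 2 statements merged into one kernel-verified Lean document; each statement's English description precedes it below -/
import Mathlib

section
/- Let δ > 0 and η > 0 be such that every s ∈ ℂ satisfying f_{η,0}(s)² − f_{η,0}(s)·e^{−s} − 1 = 0 has Re(s) ≤ −ln 2 + δ. Then there exists ε₁ > 0 such that for every ε ∈ ℝ with |ε| < ε₁ and every s ∈ ℂ satisfying f_{η,ε}(s)² − f_{η,ε}(s)·e^{−s} − 1 = 0, one has Re(s) ≤ −ln 2 + 2δ. -/
/-- `λ₁(η,ε,s) = ((1+ε) + √((1+ε)²+4ηs))/(2η)`, principal branch of the complex square root. -/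
noncomputable def lam1 (η ε : ℝ) (s : ℂ) : ℂ :=
  ((1 + (ε : ℂ)) + ((1 + (ε : ℂ)) ^ 2 + 4 * (η : ℂ) * s) ^ ((1 : ℂ) / 2)) / (2 * (η : ℂ))

/-- `λ₂(η,ε,s) = ((1+ε) − √((1+ε)²+4ηs))/(2η)`. -/
noncomputable def lam2 (η ε : ℝ) (s : ℂ) : ℂ :=
  ((1 + (ε : ℂ)) - ((1 + (ε : ℂ)) ^ 2 + 4 * (η : ℂ) * s) ^ ((1 : ℂ) / 2)) / (2 * (η : ℂ))

/-- Perturbed transfer function of the viscous transport system with velocity `1 + ε`. -/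
noncomputable def f (η ε : ℝ) (s : ℂ) : ℂ :=
  (lam1 η ε s - lam2 η ε s) /
    (lam1 η ε s * Complex.exp (-(lam2 η ε s)) - lam2 η ε s * Complex.exp (-(lam1 η ε s)))

open Complex Filter

noncomputable def Ch (z : ℂ) : ℂ := ∑' n : ℕ, z ^ n / ((2 * n).factorial : ℂ)
noncomputable def Sh (z : ℂ) : ℂ := ∑' n : ℕ, z ^ n / ((2 * n + 1).factorial : ℂ)

lemma neg_one_pow_sq (n : ℕ) : ((-1 : ℂ)) ^ n * (-1) ^ n = 1 := by
  rw [← pow_add]; exact Even.neg_one_pow ⟨n, rfl⟩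

lemma hasSum_cosh' (v : ℂ) :
    HasSum (fun n : ℕ => v ^ (2*n) / ((2*n).factorial : ℂ)) (Complex.cosh v) := by
  have h := Complex.hasSum_cos (v * Complex.I)
  rw [Complex.cos_mul_I] at h
  refine h.congr_fun fun n => ?_
  rw [mul_pow, pow_mul Complex.I, Complex.I_sq]
  rw [show ((-1:ℂ))^n * (v ^ (2*n) * ((-1:ℂ))^n) / ((2*n).factorial : ℂ)
      = v^(2*n) * (((-1:ℂ))^n*(-1)^n) / ((2*n).factorial : ℂ) from by ring]
  rw [neg_one_pow_sq, mul_one]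

lemma hasSum_sinh' (v : ℂ) :
    HasSum (fun n : ℕ => v ^ (2*n+1) / ((2*n+1).factorial : ℂ)) (Complex.sinh v) := by
  have h := Complex.hasSum_sin (v * Complex.I)
  rw [Complex.sin_mul_I] at h
  have h2 := h.div_const Complex.I
  rw [mul_div_cancel_right₀ _ Complex.I_ne_zero] at h2
  refine h2.congr_fun fun n => ?_
  rw [mul_pow, pow_succ Complex.I, pow_mul Complex.I, Complex.I_sq]
  rw [div_div, show ((2*n+1).factorial : ℂ) * Complex.I
      = Complex.I * ((2*n+1).factorial : ℂ) from mul_comm _ _, ← div_div]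
  rw [show ((-1:ℂ))^n * (v ^ (2*n+1) * (((-1:ℂ))^n * Complex.I))
      = (((-1:ℂ))^n*(-1)^n) * v^(2*n+1) * Complex.I from by ring]
  rw [neg_one_pow_sq, one_mul, mul_comm, mul_div_assoc, div_self Complex.I_ne_zero, mul_one]

lemma Ch_sq (v : ℂ) : Ch (v^2) = Complex.cosh v := by
  rw [Ch, ← (hasSum_cosh' v).tsum_eq]
  congr 1 with n
  rw [← pow_mul]

lemma Sh_sq (v : ℂ) : v * Sh (v^2) = Complex.sinh v := by
  rw [Sh, ← tsum_mul_left, ← (hasSum_sinh' v).tsum_eq]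
  congr 1 with n
  rw [← pow_mul, mul_div_assoc', ← pow_succ']

lemma Ch_zero : Ch 0 = 1 := by
  rw [Ch, tsum_eq_single 0]
  · simp
  · intro n hn; simp [zero_pow hn]

lemma Sh_zero : Sh 0 = 1 := by
  rw [Sh, tsum_eq_single 0]
  · simp
  · intro n hn; simp [zero_pow hn]

lemma summable_pow_div_fact2 (R : ℝ) (hR : 0 ≤ R) :
    Summable (fun n : ℕ => R ^ n / ((2*n).factorial : ℝ)) := by
  set x : ℝ := max 1 R with hx
  have hx1 : (1:ℝ) ≤ x := le_max_left _ _
  have hxR : R ≤ x ^ 2 := le_trans (le_max_right _ _) (by nlinarith)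
  have hs : Summable ((fun k : ℕ => x ^ k / (k.factorial : ℝ)) ∘ (fun n => 2 * n)) := by
    apply Summable.comp_injective (Real.summable_pow_div_factorial x)
    intro a b h; simp only at h; omega
  apply Summable.of_nonneg_of_le _ _ hs
  · intro n; positivity
  · intro n
    simp only [Function.comp_apply, ← pow_mul]
    gcongr
    calc R ^ n ≤ (x^2) ^ n := by gcongr
    _ = x ^ (2*n) := by rw [← pow_mul]
  
lemma continuous_tsum_pow (c : ℕ → ℂ)
    (h : ∀ R : ℝ, 0 ≤ R → Summable (fun n => R ^ n * ‖c n‖)) :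
    Continuous (fun z : ℂ => ∑' n, z ^ n * c n) := by
  rw [continuous_iff_continuousAt]
  intro x
  have hR0 : (0:ℝ) ≤ ‖x‖ + 1 := by positivity
  have hb : ∀ (n : ℕ) (z : ℂ), z ∈ Metric.closedBall (0:ℂ) (‖x‖+1) →
      ‖z ^ n * c n‖ ≤ (‖x‖+1) ^ n * ‖c n‖ := by
    intro n z hz
    rw [norm_mul, norm_pow]
    gcongr
    simpa using Metric.mem_closedBall.mp hz
  have ht := tendstoUniformlyOn_tsum (h _ hR0) hb
  have hc : ContinuousOn (fun z : ℂ => ∑' n, z ^ n * c n) (Metric.closedBall (0:ℂ) (‖x‖+1)) := by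
    apply ht.continuousOn
    refine Filter.Eventually.frequently ?_
    filter_upwards with t
    exact (continuous_finset_sum t fun n _ => (continuous_pow n).mul continuous_const).continuousOn
  exact hc.continuousAt (Metric.closedBall_mem_nhds_of_mem (by simp))

lemma continuous_Ch : Continuous Ch := by
  have he : Ch = fun z => ∑' n : ℕ, z ^ n * (((2*n).factorial : ℂ))⁻¹ := by
    funext z; rw [Ch]; simp only [Ch, div_eq_mul_inv]

  rw [he]
  apply continuous_tsum_pow
  intro R hR
  refine (summable_pow_div_fact2 R hR).congr fun n => ?_
  rw [norm_inv, Complex.norm_natCast, div_eq_mul_inv]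

lemma continuous_Sh : Continuous Sh := by
  have he : Sh = fun z => ∑' n : ℕ, z ^ n * (((2*n+1).factorial : ℂ))⁻¹ := by
    funext z; simp only [Sh, div_eq_mul_inv]
  rw [he]
  apply continuous_tsum_pow
  intro R hR
  apply Summable.of_nonneg_of_le _ _ (summable_pow_div_fact2 R hR)
  · intro n; positivity
  · intro n
    rw [norm_inv, Complex.norm_natCast, ← div_eq_mul_inv]
    gcongr
    omega

noncomputable def Efun (η c : ℝ) (s : ℂ) : ℂ :=
  2 * Complex.exp (-((c / (2*η) : ℝ) : ℂ)) *
    (Ch (((c:ℂ)^2 + 4*(η:ℂ)*s) / ((4*η^2 : ℝ) : ℂ)) +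
      ((c / (2*η) : ℝ) : ℂ) * Sh (((c:ℂ)^2 + 4*(η:ℂ)*s) / ((4*η^2 : ℝ) : ℂ)))

noncomputable def Qfun (η c : ℝ) (s : ℂ) : ℂ :=
  4 - 2 * Efun η c s * Complex.exp (-s) - (Efun η c s)^2

lemma D_eq (η c : ℝ) (hη : 0 < η) (s : ℂ) (q : ℂ)
    (hq : q^2 = (c:ℂ)^2 + 4*(η:ℂ)*s) :
    ((c:ℂ) + q) * Complex.exp (-(((c:ℂ) - q)/(2*(η:ℂ)))) -
      ((c:ℂ) - q) * Complex.exp (-(((c:ℂ) + q)/(2*(η:ℂ))))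
    = q * Efun η c s := by
  have h2η : (2*(η:ℂ)) ≠ 0 := by
    simp only [ne_eq, mul_eq_zero, OfNat.ofNat_ne_zero, false_or, Complex.ofReal_eq_zero]
    exact hη.ne'
  set v : ℂ := q / (2*(η:ℂ)) with hv
  have hca : ((c / (2*η) : ℝ) : ℂ) = (c:ℂ)/(2*(η:ℂ)) := by push_cast; ring
  have hw : (((c:ℂ)^2 + 4*(η:ℂ)*s) / ((4*η^2 : ℝ) : ℂ)) = v^2 := by
    rw [← hq, hv, div_pow]
    congr 1
    push_cast
    ring
  have e1 : Complex.exp (-(((c:ℂ) - q)/(2*(η:ℂ))))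
      = Complex.exp (-((c / (2*η) : ℝ) : ℂ)) * Complex.exp v := by
    rw [← Complex.exp_add, hca, hv]; congr 1; field_simp; ring
  have e2 : Complex.exp (-(((c:ℂ) + q)/(2*(η:ℂ))))
      = Complex.exp (-((c / (2*η) : ℝ) : ℂ)) * Complex.exp (-v) := by
    rw [← Complex.exp_add, hca, hv]; congr 1; field_simp; ring
  rw [Efun, hw, Ch_sq, e1, e2]
  rw [show q * (2 * Complex.exp (-((c / (2*η) : ℝ) : ℂ)) *
      (Complex.cosh v + ((c / (2*η) : ℝ) : ℂ) * Sh (v^2)))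
      = 2 * Complex.exp (-((c / (2*η) : ℝ) : ℂ)) *
        (q * Complex.cosh v + (c:ℂ) * (v * Sh (v^2))) from by rw [hca, hv]; ring]
  rw [Sh_sq, Complex.cosh, Complex.sinh]
  ring

lemma sq_cpow_half (z : ℂ) : (z ^ ((1:ℂ)/2))^2 = z := by
  by_cases hz : z = 0
  · rw [hz, Complex.zero_cpow (by norm_num : (1:ℂ)/2 ≠ 0)]; simp
  · rw [sq, ← Complex.cpow_add _ _ hz]
    norm_num

lemma f_eq (η ε : ℝ) (hη : 0 < η) (s : ℂ) :
    f η ε s = 2 * (((1 + (ε:ℂ))^2 + 4*(η:ℂ)*s) ^ ((1:ℂ)/2)) /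
      ((((1 + (ε:ℂ))^2 + 4*(η:ℂ)*s) ^ ((1:ℂ)/2)) * Efun η (1+ε) s) := by
  have h2η : (2*(η:ℂ)) ≠ 0 := by
    simp only [ne_eq, mul_eq_zero, OfNat.ofNat_ne_zero, false_or, Complex.ofReal_eq_zero]
    exact hη.ne'
  set z : ℂ := (1 + (ε:ℂ))^2 + 4*(η:ℂ)*s with hzdef
  set q : ℂ := z ^ ((1:ℂ)/2) with hqdef
  have hcast : ((1+ε : ℝ) : ℂ) = 1 + (ε:ℂ) := by push_cast; ring
  have hq : q^2 = ((1+ε : ℝ):ℂ)^2 + 4*(η:ℂ)*s := by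
    rw [hqdef, sq_cpow_half, hzdef, hcast]
  have hD := D_eq η (1+ε) hη s q hq
  rw [hcast] at hD
  have hnum : lam1 η ε s - lam2 η ε s = (2*q) / (2*(η:ℂ)) := by
    rw [lam1, lam2, div_sub_div_same]; congr 1; ring
  have hden : lam1 η ε s * Complex.exp (-(lam2 η ε s)) -
      lam2 η ε s * Complex.exp (-(lam1 η ε s)) = (q * Efun η (1+ε) s) / (2*(η:ℂ)) := by
    rw [lam1, lam2, ← hD]
    rw [div_mul_eq_mul_div, div_mul_eq_mul_div, div_sub_div_same]
  rw [f, hnum, hden]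
  by_cases hqe : q * Efun η (1+ε) s = 0
  · rw [hqe, zero_div, div_zero, div_zero]
  · field_simp
    have hη0 : (η:ℂ) ≠ 0 := by exact_mod_cast hη.ne'
    rw [mul_assoc, mul_comm (η:ℂ), ← mul_assoc, mul_div_mul_right _ _ hη0]

lemma char_iff (η ε : ℝ) (hη : 0 < η) (s : ℂ) :
    (f η ε s ^ 2 - f η ε s * Complex.exp (-s) - 1 = 0) ↔
    (Qfun η (1+ε) s = 0 ∧ ((1 + (ε:ℂ))^2 + 4*(η:ℂ)*s) ≠ 0 ∧ Efun η (1+ε) s ≠ 0) := by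
  set z : ℂ := (1 + (ε:ℂ))^2 + 4*(η:ℂ)*s with hzdef
  set q : ℂ := z ^ ((1:ℂ)/2) with hqdef
  set E : ℂ := Efun η (1+ε) s with hEdef
  have hfe : f η ε s = 2 * q / (q * E) := f_eq η ε hη s
  by_cases hz : z = 0
  · have hq0 : q = 0 := by rw [hqdef, hz, Complex.zero_cpow (by norm_num : (1:ℂ)/2 ≠ 0)]
    rw [hfe, hq0]
    simp [hz]
  · by_cases hE0 : E = 0
    · rw [hfe, hE0]
      simp [hE0]
    · have hq0 : q ≠ 0 := by
        intro h
        exact hz (by rw [← sq_cpow_half z, ← hqdef, h]; simp)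
      have hf2 : f η ε s = 2 / E := by
        rw [hfe, mul_comm 2 q, mul_div_mul_left _ _ hq0]
      rw [hf2]
      have key : (2/E)^2 - (2/E) * Complex.exp (-s) - 1 = Qfun η (1+ε) s / E^2 := by
        rw [Qfun, ← hEdef]
        field_simp
        ring
      rw [key, div_eq_zero_iff]
      constructor
      · rintro (h | h)
        · exact ⟨h, hz, hE0⟩
        · exact absurd (pow_eq_zero_iff (by norm_num)|>.mp h) hE0
      · rintro ⟨h, -, -⟩; exact Or.inl h

lemma exp_le_one_add_two_mul (x : ℝ) (hx0 : 0 ≤ x) (hx : x ≤ Real.log 2) :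
    Real.exp x ≤ 1 + 2*x := by
  have hx1 : |x| ≤ 1 := by
    rw [_root_.abs_of_nonneg hx0]
    have := Real.log_two_lt_d9
    linarith
  have hb := Real.exp_bound hx1 (by norm_num : 0 < 2)
  have hsum : ∑ i ∈ Finset.range 2, x ^ i / (i.factorial : ℝ) = 1 + x := by
    simp [Finset.sum_range_succ]
  rw [hsum] at hb
  norm_num [Nat.factorial] at hb
  have h2 := (abs_le.mp hb).2
  have hxle1 : x ≤ 1 := le_trans (le_abs_self x) hx1
  nlinarith [h2, mul_nonneg hx0 (sub_nonneg.mpr hxle1)]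

lemma Efun_center (η c : ℝ) (hη : 0 < η) (s : ℂ)
    (hz : (c:ℂ)^2 + 4*(η:ℂ)*s = 0) :
    Efun η c s = ((2 * Real.exp (-(c/(2*η))) * (1 + c/(2*η)) : ℝ) : ℂ) := by
  rw [Efun, hz, zero_div, Ch_zero, Sh_zero]
  push_cast [Complex.ofReal_exp]
  ring

lemma center_ne_zero (η : ℝ) (hη : 0 < η) (s : ℂ)
    (hz : (1:ℂ)^2 + 4*(η:ℂ)*s = 0) (hre : -Real.log 2 ≤ s.re) :
    Qfun η 1 s ≠ 0 := by
  have hs : s = ((-(1/(4*η)) : ℝ) : ℂ) := by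
    have h4 : (4*(η:ℂ)) ≠ 0 := by
      simp only [ne_eq, mul_eq_zero, OfNat.ofNat_ne_zero, false_or, Complex.ofReal_eq_zero]
      exact hη.ne'
    push_cast
    rw [eq_comm, neg_eq_iff_eq_neg, div_eq_iff h4]
    linear_combination hz
  have ha0 : 0 < 1/(2*η) := by positivity
  have hsre : s.re = -(1/(4*η)) := by rw [hs]; simp
  have hrea : 1/(4*η) ≤ Real.log 2 := by rw [hsre] at hre; linarith
  have hE : Efun η 1 s = ((2 * Real.exp (-((1:ℝ)/(2*η))) * (1 + (1:ℝ)/(2*η)) : ℝ) : ℂ) := by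
    have h1 := Efun_center η 1 hη s (by push_cast; linear_combination hz)
    exact h1
  have hexp : Complex.exp (-s) = ((Real.exp (1/(4*η)) : ℝ) : ℂ) := by
    rw [hs, ← Complex.ofReal_neg, ← Complex.ofReal_exp]
    norm_num
  have hQr : Qfun η 1 s = ((4 - 2 * (2 * Real.exp (-(1/(2*η))) * (1 + 1/(2*η)))
      * Real.exp (1/(4*η)) - (2 * Real.exp (-(1/(2*η))) * (1 + 1/(2*η)))^2 : ℝ) : ℂ) := by
    rw [Qfun, hE, hexp]
    push_cast [Complex.ofReal_exp]
    ring
  set a : ℝ := 1/(2*η) with ha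
  have key : (4 - 2 * (2 * Real.exp (-a) * (1 + a)) * Real.exp (1/(4*η))
      - (2 * Real.exp (-a) * (1 + a))^2 : ℝ) < 0 := by
    have h1 : Real.exp (a/2) ≤ 1 + a := by
      have := exp_le_one_add_two_mul (a/2) (by positivity)
        (by rw [ha, show ((1:ℝ)/(2*η)/2 : ℝ) = 1/(4*η) from by ring]; exact hrea)
      linarith
    have h2 : (1/(4*η)) = a/2 := by rw [ha]; ring
    rw [h2]
    have hepos := Real.exp_pos (a/2)
    have h3 : Real.exp (-a) * Real.exp (a/2) = Real.exp (-(a/2)) := by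
      rw [← Real.exp_add]; ring_nf
    have h6 : 1 ≤ (1+a) * Real.exp (-(a/2)) := by
      rw [Real.exp_neg]
      have hinv : (0:ℝ) ≤ (Real.exp (a/2))⁻¹ := by positivity
      have hcancel : Real.exp (a/2) * (Real.exp (a/2))⁻¹ = 1 :=
        mul_inv_cancel₀ (ne_of_gt hepos)
      nlinarith [mul_nonneg (sub_nonneg.mpr h1) hinv]
    have h4 : 4 ≤ 2 * (2 * Real.exp (-a) * (1 + a)) * Real.exp (a/2) := by
      have h5 : 2 * (2 * Real.exp (-a) * (1 + a)) * Real.exp (a/2)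
          = 4 * ((1+a) * Real.exp (-(a/2))) := by rw [← h3]; ring
      rw [h5]; linarith
    have hEpos : (0:ℝ) < 2 * Real.exp (-a) * (1 + a) := by positivity
    nlinarith [pow_pos hEpos 2]
  rw [hQr]
  simp only [ne_eq, Complex.ofReal_eq_zero]
  exact ne_of_lt key

noncomputable abbrev Complex.abs : AbsoluteValue ℂ ℝ where
  toFun z := ‖z‖
  map_mul' := norm_mul
  nonneg' := norm_nonneg
  eq_zero' _ := norm_eq_zero
  add_le' := norm_add_le

theorem Complex.abs_apply (z : ℂ) : Complex.abs z = ‖z‖ := rfl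

theorem Complex.abs_ofReal (r : ℝ) : Complex.abs (r : ℂ) = |r| := by
  rw [Complex.abs_apply]; simp

theorem Complex.abs_exp (z : ℂ) : Complex.abs (Complex.exp z) = Real.exp z.re := Complex.norm_exp z

lemma cabs_sub_le (x y : ℂ) : Complex.abs (x - y) ≤ Complex.abs x + Complex.abs y := by
  rw [sub_eq_add_neg]
  refine (Complex.abs.add_le x (-y)).trans ?_
  rw [Complex.abs.map_neg]

lemma cabs_le_sub (x y : ℂ) : Complex.abs x - Complex.abs y ≤ Complex.abs (x - y) :=
  Complex.abs.le_sub x y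

lemma re_sqrt_ge (z : ℂ) (C : ℝ) (hC : 0 ≤ C) (hzre : -C ≤ z.re)
    (habs1 : 1 ≤ Complex.abs z) (habs2 : 2*C ≤ Complex.abs z) :
    Complex.abs (z ^ ((1:ℂ)/2)) / 2 ≤ (z ^ ((1:ℂ)/2)).re := by
  have hz0 : z ≠ 0 := by
    intro h; rw [h] at habs1; simp at habs1; linarith
  have habspos : (0:ℝ) < Complex.abs z := lt_of_lt_of_le one_pos habs1
  have hq' : z ^ ((1:ℂ)/2) = Complex.exp (((1/2:ℝ):ℂ) * Complex.log z) := by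
    rw [Complex.cpow_def_of_ne_zero hz0]
    congr 1
    push_cast
    ring
  have hre : (((1/2:ℝ):ℂ) * Complex.log z).re = Real.log (Complex.abs z) / 2 := by
    rw [Complex.re_ofReal_mul, Complex.log_re, Complex.abs_apply]
    ring
  have him : (((1/2:ℝ):ℂ) * Complex.log z).im = z.arg / 2 := by
    rw [Complex.im_ofReal_mul, Complex.log_im]
    ring
  have habsq : Complex.abs (z ^ ((1:ℂ)/2)) = Real.exp (Real.log (Complex.abs z) / 2) := by
    rw [hq', Complex.abs_exp, hre]
  have hqre : (z ^ ((1:ℂ)/2)).re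
      = Real.exp (Real.log (Complex.abs z) / 2) * Real.cos (z.arg / 2) := by
    rw [hq', Complex.exp_re, hre, him]
  have hcosnn : 0 ≤ Real.cos (z.arg / 2) := by
    apply Real.cos_nonneg_of_mem_Icc
    constructor
    · have := Complex.neg_pi_lt_arg z; linarith
    · have := Complex.arg_le_pi z; linarith
  have hratio : -(1/2 : ℝ) ≤ z.re / Complex.abs z := by
    have h1 : -C / Complex.abs z ≤ z.re / Complex.abs z := by gcongr
    have h2 : -(1/2 : ℝ) ≤ -C / Complex.abs z := by
      rw [neg_div, neg_le_neg_iff, div_le_iff₀ habspos]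
      linarith
    linarith
  have hcos : (1/2 : ℝ) ≤ Real.cos (z.arg / 2) := by
    have hsq := Real.cos_sq (z.arg / 2)
    rw [show 2*(z.arg/2) = z.arg from by ring, Complex.cos_arg hz0, ← Complex.abs_apply] at hsq
    nlinarith [hratio, hcosnn]
  rw [habsq, hqre]
  have hexppos : (0:ℝ) < Real.exp (Real.log (Complex.abs z) / 2) := Real.exp_pos _
  nlinarith [hcos, hexppos]

set_option maxHeartbeats 1600000 in
lemma far_ne_zero (η : ℝ) (hη : 0 < η) :
    ∃ R : ℝ, 0 < R ∧ ∀ c : ℝ, 1/2 ≤ c → c ≤ 3/2 → ∀ s : ℂ,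
      -Real.log 2 ≤ s.re → R ≤ Complex.abs s → Qfun η c s ≠ 0 := by
  set a : ℝ := 1/(2*η) with ha
  have ha0 : 0 < a := by positivity
  set C : ℝ := 4*η*Real.log 2 with hC
  have hC0 : 0 ≤ C := by
    have := Real.log_pos (by norm_num : (1:ℝ) < 2)
    positivity
  set T : ℝ := max 3 ((2/a)*(Real.log 13 + 3*a/2)) with hT
  have hT3 : (3:ℝ) ≤ T := le_max_left _ _
  have hT0 : 0 < T := by linarith
  have hexpT : (13:ℝ) ≤ Real.exp (a*T/2 - 3*a/2) := by
    have h1 : (2/a)*(Real.log 13 + 3*a/2) ≤ T := le_max_right _ _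
    have h2 : Real.log 13 + 3*a/2 ≤ a*T/2 := by
      rw [show a*T/2 = (a/2)*T from by ring]
      calc Real.log 13 + 3*a/2 = (a/2) * ((2/a)*(Real.log 13 + 3*a/2)) := by
            field_simp
          _ ≤ (a/2)*T := by
            apply mul_le_mul_of_nonneg_left h1 (by positivity)
    calc (13:ℝ) = Real.exp (Real.log 13) := by
          rw [Real.exp_log]; norm_num
      _ ≤ Real.exp (a*T/2 - 3*a/2) := by
          apply Real.exp_le_exp.mpr; linarith
  refine ⟨(T^2 + 9/4 + 2*C + 1)/(4*η) + 1, by positivity, ?_⟩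
  intro c hc1 hc2 s hsre hsabs
  set z : ℂ := (c:ℂ)^2 + 4*(η:ℂ)*s with hzdef
  set q : ℂ := z ^ ((1:ℂ)/2) with hqdef
  have hq2 : q^2 = z := sq_cpow_half z
  clear_value q
  clear_value z
  -- lower bound on |z|
  have habs4s : Complex.abs (4*(η:ℂ)*s) = 4*η*Complex.abs s := by
    rw [show (4:ℂ)*(η:ℂ)*s = ((4*η:ℝ):ℂ)*s from by push_cast; ring, map_mul,
      Complex.abs_ofReal, abs_of_pos (by positivity)]
  have habsc : Complex.abs ((c:ℂ)^2) = c^2 := by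
    rw [show ((c:ℂ))^2 = ((c^2:ℝ):ℂ) from by push_cast; ring, Complex.abs_ofReal,
      abs_of_pos (by positivity)]
  have habsz : T^2 + 2*C + 1 ≤ Complex.abs z := by
    have htri : Complex.abs (4*(η:ℂ)*s) - Complex.abs ((c:ℂ)^2) ≤ Complex.abs z := by
      have h := cabs_le_sub (4*(η:ℂ)*s) (-((c:ℂ)^2))
      rw [Complex.abs.map_neg, sub_neg_eq_add] at h
      rw [show (4*(η:ℂ)*s + (c:ℂ)^2) = z from by rw [hzdef]; ring] at h
      exact h
    rw [habs4s, habsc] at htri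
    have hs4 : T^2 + 9/4 + 2*C + 1 ≤ 4*η*Complex.abs s := by
      have h0 : (T^2 + 9/4 + 2*C + 1)/(4*η) ≤ Complex.abs s := by linarith
      calc T^2 + 9/4 + 2*C + 1 = 4*η*((T^2 + 9/4 + 2*C + 1)/(4*η)) := by
            field_simp
        _ ≤ 4*η*Complex.abs s := by
            apply mul_le_mul_of_nonneg_left h0 (by positivity)
    have hc94 : c^2 ≤ 9/4 := by nlinarith
    linarith
  have habsz1 : (1:ℝ) ≤ Complex.abs z := by nlinarith [habsz, hT3, hC0]
  have hz0 : z ≠ 0 := by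
    intro h; rw [h] at habsz1; simp at habsz1; linarith
  -- |q| ≥ T
  have habsq2 : (Complex.abs q)^2 = Complex.abs z := by
    rw [← map_pow, hq2]
  have habsqT : T ≤ Complex.abs q := by
    nlinarith [habsq2, habsz, Complex.abs.nonneg q, hT0, hC0]
  have habsqpos : (0:ℝ) < Complex.abs q := lt_of_lt_of_le hT0 habsqT
  -- Re q ≥ |q|/2
  have hzre : z.re = c^2 + 4*η*s.re := by
    rw [show z = ((c^2:ℝ):ℂ) + ((4*η:ℝ):ℂ)*s from by rw [hzdef]; push_cast; ring]
    rw [Complex.add_re, Complex.re_ofReal_mul, Complex.ofReal_re]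
  have hzreC : -C ≤ z.re := by
    rw [hzre, hC]
    nlinarith [hsre, sq_nonneg c, hη]
  have hqre : Complex.abs q / 2 ≤ q.re := by
    rw [hqdef]
    exact re_sqrt_ge z C hC0 hzreC habsz1 (by nlinarith [habsz, sq_nonneg T])
  -- |E| ≥ 5
  have hcast : q^2 = ((c:ℝ):ℂ)^2 + 4*((η:ℝ):ℂ)*s := by rw [hq2, hzdef]
  have hD := D_eq η c hη s q hcast
  set E : ℂ := Efun η c s with hEdef
  clear_value E
  have habsA : Complex.abs (Complex.exp (-(((c:ℂ) - q)/(2*(η:ℂ))))) = Real.exp (a*(q.re - c)) := by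
    rw [show -(((c:ℂ) - q)/(2*(η:ℂ))) = ((a:ℝ):ℂ) * (q - (c:ℂ)) from by
      rw [ha]; push_cast; try field_simp; try ring]
    rw [Complex.abs_exp, Complex.re_ofReal_mul]
    congr 1
  have habsB : Complex.abs (Complex.exp (-(((c:ℂ) + q)/(2*(η:ℂ))))) = Real.exp (-(a*(c + q.re))) := by
    rw [show -(((c:ℂ) + q)/(2*(η:ℂ))) = ((a:ℝ):ℂ) * (-(c:ℂ) - q) from by
      rw [ha]; push_cast; try field_simp; try ring]
    rw [Complex.abs_exp, Complex.re_ofReal_mul]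
    congr 1
    simp [Complex.sub_re, Complex.neg_re]
    ring
  have habscq1 : Complex.abs q - c ≤ Complex.abs ((c:ℂ) + q) := by
    have h := cabs_le_sub q (-((c:ℂ)))
    rw [Complex.abs.map_neg, sub_neg_eq_add, Complex.abs_ofReal,
      abs_of_pos (by linarith : (0:ℝ) < c)] at h
    rw [show q + (c:ℂ) = (c:ℂ) + q from by ring] at h
    exact h
  have habscq2 : Complex.abs ((c:ℂ) - q) ≤ c + Complex.abs q := by
    calc Complex.abs ((c:ℂ) - q) ≤ Complex.abs ((c:ℂ)) + Complex.abs q := cabs_sub_le _ _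
      _ = c + Complex.abs q := by rw [Complex.abs_ofReal, abs_of_pos (by linarith : (0:ℝ) < c)]
  have hexpB1 : Real.exp (-(a*(c + q.re))) ≤ 1 := by
    rw [Real.exp_le_one_iff]
    have : 0 ≤ q.re := le_trans (by positivity) hqre
    nlinarith [ha0]
  have hexpA : (13:ℝ) ≤ Real.exp (a*(q.re - c)) := by
    apply le_trans hexpT
    apply Real.exp_le_exp.mpr
    have h1 : T/2 ≤ q.re := le_trans (by linarith [habsqT]) hqre
    nlinarith [ha0, hc2, h1]
  have hDlow : 5 * Complex.abs q ≤ Complex.abs (q * E) := by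
    rw [← hD]
    have htri : Complex.abs ((c:ℂ) + q) * Real.exp (a*(q.re - c))
        - Complex.abs ((c:ℂ) - q) * Real.exp (-(a*(c + q.re)))
        ≤ Complex.abs (((c:ℂ) + q) * Complex.exp (-(((c:ℂ) - q)/(2*(η:ℂ))))
          - ((c:ℂ) - q) * Complex.exp (-(((c:ℂ) + q)/(2*(η:ℂ))))) := by
      calc Complex.abs ((c:ℂ) + q) * Real.exp (a*(q.re - c))
          - Complex.abs ((c:ℂ) - q) * Real.exp (-(a*(c + q.re)))
          = Complex.abs (((c:ℂ) + q) * Complex.exp (-(((c:ℂ) - q)/(2*(η:ℂ)))))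
            - Complex.abs (((c:ℂ) - q) * Complex.exp (-(((c:ℂ) + q)/(2*(η:ℂ))))) := by
            rw [map_mul, map_mul, habsA, habsB]
        _ ≤ _ := cabs_le_sub _ _
    have hmid : 5 * Complex.abs q ≤ Complex.abs ((c:ℂ) + q) * Real.exp (a*(q.re - c))
        - Complex.abs ((c:ℂ) - q) * Real.exp (-(a*(c + q.re))) := by
      have h1 : (Complex.abs q - c) * 13 ≤ Complex.abs ((c:ℂ) + q) * Real.exp (a*(q.re - c)) := by
        apply mul_le_mul habscq1 hexpA (by norm_num) (Complex.abs.nonneg _) |>.trans_eq rfl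
      have h2 : Complex.abs ((c:ℂ) - q) * Real.exp (-(a*(c + q.re)))
          ≤ c + Complex.abs q := by
        calc Complex.abs ((c:ℂ) - q) * Real.exp (-(a*(c + q.re)))
            ≤ (c + Complex.abs q) * 1 := by
              apply mul_le_mul habscq2 hexpB1 (Real.exp_pos _).le (by linarith [habsqT, hc1])
          _ = c + Complex.abs q := mul_one _
      nlinarith [habsqT, hc1, hc2, hT3]
    linarith
  have hE5 : (5:ℝ) ≤ Complex.abs E := by
    rw [map_mul] at hDlow
    calc (5:ℝ) = 5 * Complex.abs q / Complex.abs q := by field_simp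
      _ ≤ Complex.abs q * Complex.abs E / Complex.abs q := by gcongr
      _ = Complex.abs E := by field_simp
  -- conclude
  intro hQ
  rw [Qfun, ← hEdef] at hQ
  have hEsq : E^2 = 4 - 2*E*Complex.exp (-s) := by linear_combination -hQ
  have habsexp : Complex.abs (Complex.exp (-s)) ≤ 2 := by
    rw [Complex.abs_exp]
    calc Real.exp ((-s).re) ≤ Real.exp (Real.log 2) := by
          apply Real.exp_le_exp.mpr
          simp only [Complex.neg_re]
          linarith
      _ = 2 := Real.exp_log (by norm_num)
  have habsEsq : (Complex.abs E)^2 ≤ 4 + 4*Complex.abs E := by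
    have h1 : (Complex.abs E)^2 = Complex.abs (E^2) := by rw [map_pow]
    rw [h1, hEsq]
    calc Complex.abs (4 - 2*E*Complex.exp (-s))
        ≤ Complex.abs (4:ℂ) + Complex.abs (2*E*Complex.exp (-s)) := cabs_sub_le _ _
      _ ≤ 4 + 4*Complex.abs E := by
          rw [map_mul, map_mul]
          have : Complex.abs (2:ℂ) = 2 := by norm_num
          have h4 : Complex.abs (4:ℂ) = 4 := by norm_num
          rw [this, h4]
          nlinarith [habsexp, Complex.abs.nonneg E]
  nlinarith [hE5, habsEsq]

lemma continuous_Qfun (η : ℝ) : Continuous (fun p : ℝ × ℂ => Qfun η p.1 p.2) := by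
  have hc1 : Continuous (fun p : ℝ × ℂ => ((p.1 / (2*η) : ℝ) : ℂ)) :=
    Complex.continuous_ofReal.comp (continuous_fst.div_const (2*η))
  have harg : Continuous (fun p : ℝ × ℂ =>
      (((p.1:ℂ))^2 + 4*(η:ℂ)*p.2) / ((4*η^2 : ℝ) : ℂ)) := by
    apply Continuous.div_const
    exact ((Complex.continuous_ofReal.comp continuous_fst).pow 2).add
      (continuous_const.mul continuous_snd)
  have hE : Continuous (fun p : ℝ × ℂ => Efun η p.1 p.2) := by
    unfold Efun
    exact (continuous_const.mul (Complex.continuous_exp.comp hc1.neg)).mul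
      ((continuous_Ch.comp harg).add (hc1.mul (continuous_Sh.comp harg)))
  unfold Qfun
  exact (continuous_const.sub ((continuous_const.mul hE).mul
    (Complex.continuous_exp.comp continuous_snd.neg))).sub (hE.pow 2)

theorem stmt_1 (δ η : ℝ) (hδ : 0 < δ) (hη : 0 < η)
    (hnom : ∀ s : ℂ, f η 0 s ^ 2 - f η 0 s * Complex.exp (-s) - 1 = 0 →
      s.re ≤ -Real.log 2 + δ) :
    ∃ ε₁ : ℝ, 0 < ε₁ ∧
      ∀ ε : ℝ, |ε| < ε₁ →
        ∀ s : ℂ, f η ε s ^ 2 - f η ε s * Complex.exp (-s) - 1 = 0 →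
          s.re ≤ -Real.log 2 + 2 * δ := by
  obtain ⟨R, hR0, hfar⟩ := far_ne_zero η hη
  set B : Set ℂ := {s : ℂ | -Real.log 2 + 2*δ ≤ s.re} ∩ Metric.closedBall 0 R with hB
  have hBcompact : IsCompact B :=
    (isCompact_closedBall (0:ℂ) R).of_isClosed_subset
      ((isClosed_le continuous_const Complex.continuous_re).inter Metric.isClosed_closedBall)
      Set.inter_subset_right
  have hQ1 : ∀ s ∈ B, Qfun η 1 s ≠ 0 := by
    rintro s ⟨hsre, -⟩ hQ0
    simp only [Set.mem_setOf_eq] at hsre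
    by_cases hz : (1:ℂ)^2 + 4*(η:ℂ)*s = 0
    · exact center_ne_zero η hη s hz (by linarith [hsre]) hQ0
    · by_cases hE : Efun η 1 s = 0
      · rw [Qfun, hE] at hQ0
        simp at hQ0
      · have hzz : (1 + ((0:ℝ):ℂ))^2 + 4*(η:ℂ)*s ≠ 0 := by simpa using hz
        have hQ0' : Qfun η (1+0) s = 0 := by simpa using hQ0
        have hE' : Efun η (1+0) s ≠ 0 := by simpa using hE
        have hcar := (char_iff η 0 hη s).mpr ⟨hQ0', hzz, hE'⟩
        have := hnom s hcar
        linarith [hsre]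
  have hV : IsOpen {p : ℝ × ℂ | Qfun η p.1 p.2 ≠ 0} :=
    isOpen_compl_singleton.preimage (continuous_Qfun η)
  have hsub : ({(1:ℝ)} ×ˢ B) ⊆ {p : ℝ × ℂ | Qfun η p.1 p.2 ≠ 0} := by
    rintro ⟨c0, s⟩ ⟨hc0, hsB⟩
    simp only [Set.mem_singleton_iff] at hc0
    subst hc0
    exact hQ1 s hsB
  obtain ⟨u, v, hu, hv, h1u, hBv, huv⟩ :=
    generalized_tube_lemma isCompact_singleton hBcompact hV hsub
  obtain ⟨r, hr0, hball⟩ := Metric.isOpen_iff.mp hu 1 (h1u rfl)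
  refine ⟨min r (1/2), by positivity, ?_⟩
  intro ε hε s hchar
  have hrε : |ε| < r := lt_of_lt_of_le hε (min_le_left _ _)
  have h12 : |ε| < 1/2 := lt_of_lt_of_le hε (min_le_right _ _)
  have habs := abs_lt.mp h12
  by_contra hgt
  push_neg at hgt
  have hlog2 : 0 < Real.log 2 := Real.log_pos (by norm_num)
  have hre' : -Real.log 2 ≤ s.re := by linarith [hgt.le]
  have hQ := (char_iff η ε hη s).mp hchar
  by_cases hRs : R ≤ Complex.abs s
  · exact hfar (1+ε) (by linarith [habs.1]) (by linarith [habs.2]) s hre' hRs hQ.1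
  · have hsB : s ∈ B := by
      constructor
      · simp only [Set.mem_setOf_eq]
        exact hgt.le
      · simp only [Metric.mem_closedBall, Complex.dist_eq, sub_zero]
        exact le_of_not_ge hRs
    have hmem : ((1+ε : ℝ), s) ∈ u ×ˢ v := by
      constructor
      · apply hball
        simp only [Metric.mem_ball, Real.dist_eq]
        convert hrε using 2
        ring
      · exact hBv hsB
    exact (huv hmem) hQ.1
end

section
/- For k₁ = 0 and k₂ = 1, the infimum, over all positive diagonal 3×3 matrices D, of the operator norm ‖D·K·D⁻¹‖₂ equals √2. -/
/-- The operator norm of a `3 × 3` real matrix acting on Euclidean `ℝ³` (largest singular value). -/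
noncomputable def opNorm2 (A : Matrix (Fin 3) (Fin 3) ℝ) : ℝ :=
  ‖Matrix.toEuclideanCLM (𝕜 := ℝ) A‖

/-- The boundary coupling matrix `K` with `k₁ = 0` and `k₂ = 1`. -/
def Kmat : Matrix (Fin 3) (Fin 3) ℝ :=
  !![0, 1, -1; 1, 0, 0; 1, 0, 0]

lemma key_alg (a b c N : ℝ) (ha : 0 < a) (hb : 0 < b) (hc : 0 < c) (hN : 0 ≤ N)
    (h1 : Real.sqrt (b^2 + c^2) ≤ N * a) (h2 : a * (1/b + 1/c) ≤ N * Real.sqrt 2) :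
    Real.sqrt 2 ≤ N := by
  have hb2 : b^2 + c^2 ≤ N^2 * a^2 := by
    have := Real.sq_sqrt (by positivity : (0:ℝ) ≤ b^2 + c^2)
    nlinarith [Real.sqrt_nonneg (b^2+c^2)]
  have hh2 : (a * (1/b + 1/c))^2 ≤ 2 * N^2 := by
    have hs : Real.sqrt 2 ^ 2 = 2 := Real.sq_sqrt (by norm_num)
    have h2' : 0 ≤ a * (1/b + 1/c) := by positivity
    nlinarith [Real.sqrt_nonneg 2]
  have hh2' : (a * (b + c))^2 ≤ 2 * N^2 * (b*c)^2 := by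
    have h := hh2
    have hbc : (1/b + 1/c) = (b+c)/(b*c) := by field_simp; ring
    rw [hbc] at h
    have : (a * ((b+c)/(b*c)))^2 = (a*(b+c))^2 / (b*c)^2 := by ring
    rw [this, div_le_iff₀ (by positivity)] at h
    linarith
  have key1 : 8*(b*c)^2 ≤ (b^2+c^2)*(b+c)^2 := by
    nlinarith [mul_nonneg (sq_nonneg (b-c)) (mul_pos hb hc).le]
  have P : (b^2+c^2)*(a*(b+c))^2 ≤ N^2*a^2 * (2*N^2*(b*c)^2) :=
    mul_le_mul hb2 hh2' (sq_nonneg _) (by positivity)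
  have P2 : 8*(a^2*(b*c)^2) ≤ 2*N^4*(a^2*(b*c)^2) := by
    nlinarith [mul_le_mul_of_nonneg_left key1 (sq_nonneg a)]
  have hT : 0 < a^2*(b*c)^2 := by positivity
  have h4 : 4 ≤ N^4 := by nlinarith
  have h2N : 2 ≤ N^2 := by nlinarith [sq_nonneg N]
  calc Real.sqrt 2 ≤ Real.sqrt (N^2) := Real.sqrt_le_sqrt h2N
    _ = N := Real.sqrt_sq hN

lemma normCLM (A : Matrix (Fin 3) (Fin 3) ℝ) (x : Fin 3 → ℝ) :
    ‖Matrix.toEuclideanCLM (𝕜 := ℝ) A ((WithLp.equiv 2 _).symm x)‖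
      = Real.sqrt ((A.mulVec x 0)^2 + (A.mulVec x 1)^2 + (A.mulVec x 2)^2) := by
  rw [WithLp.equiv_symm_apply, Matrix.toEuclideanCLM_toLp, EuclideanSpace.norm_eq]
  simp [Fin.sum_univ_three, sq_abs]

lemma norm_symm (x : Fin 3 → ℝ) :
    ‖(WithLp.equiv 2 (Fin 3 → ℝ)).symm x‖ = Real.sqrt (x 0^2 + x 1^2 + x 2^2) := by
  rw [EuclideanSpace.norm_eq]; simp [Fin.sum_univ_three, sq_abs]

lemma Kmat_mulVec (y : Fin 3 → ℝ) : Kmat.mulVec y = ![y 1 - y 2, y 0, y 0] := by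
  funext i
  simp [Kmat, Matrix.cons_mulVec, Matrix.cons_dotProduct, Matrix.vecHead, Matrix.vecTail]
  fin_cases i <;> simp <;> ring

lemma upper : opNorm2 Kmat ≤ Real.sqrt 2 := by
  apply ContinuousLinearMap.opNorm_le_bound _ (Real.sqrt_nonneg 2)
  intro x
  obtain ⟨y, rfl⟩ := (WithLp.equiv 2 (Fin 3 → ℝ)).symm.surjective x
  rw [normCLM, norm_symm, ← Real.sqrt_mul (by norm_num : (0:ℝ) ≤ 2)]
  apply Real.sqrt_le_sqrt
  rw [Kmat_mulVec]
  simp only [Matrix.cons_val_zero, Matrix.cons_val_one, Matrix.head_cons,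
    Matrix.cons_val_two, Matrix.tail_cons]
  nlinarith [sq_nonneg (y 1 + y 2)]

lemma lower (D : Matrix (Fin 3) (Fin 3) ℝ) (hD : D.IsDiag) (hpos : ∀ i, 0 < D i i) :
    Real.sqrt 2 ≤ opNorm2 (D * Kmat * D⁻¹) := by
  set d : Fin 3 → ℝ := D.diag with hd
  have hDeq : D = Matrix.diagonal d := hD.diagonal_diag.symm
  have hdpos : ∀ i, 0 < d i := fun i => hpos i
  have hdet : D.det ≠ 0 := by
    rw [hDeq, Matrix.det_diagonal]
    exact ne_of_gt (Finset.prod_pos fun i _ => hdpos i)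
  have hinv : D⁻¹ * D = 1 := Matrix.nonsing_inv_mul D (isUnit_iff_ne_zero.mpr hdet)
  have hDK : D * Kmat * D⁻¹ * D = D * Kmat := by
    rw [mul_assoc, hinv, mul_one]
  set f := Matrix.toEuclideanCLM (𝕜 := ℝ) (D * Kmat * D⁻¹) with hf
  have key : ∀ y : Fin 3 → ℝ,
      f ((WithLp.equiv 2 _).symm (D.mulVec y))
        = (WithLp.equiv 2 _).symm ((D * Kmat).mulVec y) := by
    intro y
    rw [hf, WithLp.equiv_symm_apply, Matrix.toEuclideanCLM_toLp, Matrix.mulVec_mulVec, hDK]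
  have hDKmul : ∀ y : Fin 3 → ℝ, (D * Kmat).mulVec y = D.mulVec (Kmat.mulVec y) :=
    fun y => (Matrix.mulVec_mulVec y D Kmat).symm
  -- first test vector
  have e1 : D.mulVec ![1,0,0] = ![d 0, 0, 0] := by
    funext i; rw [hDeq]; fin_cases i <;> simp [Matrix.mulVec_diagonal]
  have e2 : (D * Kmat).mulVec ![1,0,0] = ![0, d 1, d 2] := by
    rw [hDKmul, Kmat_mulVec]
    funext i; rw [hDeq]; fin_cases i <;> simp [Matrix.mulVec_diagonal]
  -- second test vector
  have hd1 := (hdpos 1).ne'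
  have hd2 := (hdpos 2).ne'
  have e3 : D.mulVec ![0, 1/(d 1), -(1/(d 2))] = ![0, 1, -1] := by
    funext i; rw [hDeq]; fin_cases i <;>
      simp [Matrix.mulVec_diagonal] <;> field_simp
  have e4 : (D * Kmat).mulVec ![0, 1/(d 1), -(1/(d 2))]
      = ![d 0 * (1/(d 1) + 1/(d 2)), 0, 0] := by
    rw [hDKmul, Kmat_mulVec]
    funext i; rw [hDeq]; fin_cases i <;>
      simp [Matrix.mulVec_diagonal] <;> ring
  have hN : 0 ≤ opNorm2 (D * Kmat * D⁻¹) := norm_nonneg _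
  have h1 : Real.sqrt ((d 1)^2 + (d 2)^2) ≤ opNorm2 (D * Kmat * D⁻¹) * d 0 := by
    have := f.le_opNorm ((WithLp.equiv 2 _).symm (D.mulVec ![1,0,0]))
    rw [key, e1, e2, norm_symm, norm_symm] at this
    simp only [Matrix.cons_val_zero, Matrix.cons_val_one, Matrix.head_cons,
      Matrix.cons_val_two, Matrix.tail_cons] at this
    have h0 : Real.sqrt (d 0 ^2 + 0^2 + 0^2) = d 0 := by
      rw [show d 0^2 + 0^2 + 0^2 = d 0 ^2 by ring, Real.sqrt_sq (hdpos 0).le]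
    rw [h0] at this
    calc Real.sqrt ((d 1)^2 + (d 2)^2)
        = Real.sqrt (0^2 + d 1 ^2 + d 2^2) := by ring_nf
      _ ≤ _ := this
  have h2 : d 0 * (1/(d 1) + 1/(d 2)) ≤ opNorm2 (D * Kmat * D⁻¹) * Real.sqrt 2 := by
    have := f.le_opNorm ((WithLp.equiv 2 _).symm (D.mulVec ![0, 1/(d 1), -(1/(d 2))]))
    rw [key, e3, e4, norm_symm, norm_symm] at this
    simp only [Matrix.cons_val_zero, Matrix.cons_val_one, Matrix.head_cons,
      Matrix.cons_val_two, Matrix.tail_cons] at this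
    have h0 : Real.sqrt ((d 0 * (1/(d 1) + 1/(d 2)))^2 + 0^2 + 0^2)
        = d 0 * (1/(d 1) + 1/(d 2)) := by
      rw [show (d 0 * (1/(d 1) + 1/(d 2)))^2 + 0^2 + 0^2
            = (d 0 * (1/(d 1) + 1/(d 2)))^2 by ring]
      exact Real.sqrt_sq (mul_nonneg (hdpos 0).le (add_nonneg (one_div_nonneg.mpr (hdpos 1).le) (one_div_nonneg.mpr (hdpos 2).le)))
    have h0' : Real.sqrt ((0:ℝ)^2 + 1^2 + (-1)^2) = Real.sqrt 2 := by norm_num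
    rw [h0, h0'] at this
    exact this
  exact key_alg (d 0) (d 1) (d 2) _ (hdpos 0) (hdpos 1) (hdpos 2) hN h1 h2

lemma opNorm2_Kmat : opNorm2 (1 * Kmat * (1 : Matrix (Fin 3) (Fin 3) ℝ)⁻¹) = Real.sqrt 2 := by
  have h1 : (1 : Matrix (Fin 3) (Fin 3) ℝ) * Kmat * (1 : Matrix (Fin 3) (Fin 3) ℝ)⁻¹ = Kmat := by
    rw [inv_one, one_mul, mul_one]
  have hlow := lower 1 Matrix.isDiag_one (fun i => by simp)
  rw [h1] at hlow ⊢
  exact le_antisymm upper hlow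

theorem stmt_9 :
    sInf {x : ℝ | ∃ D : Matrix (Fin 3) (Fin 3) ℝ, D.IsDiag ∧ (∀ i, 0 < D i i) ∧
        x = opNorm2 (D * Kmat * D⁻¹)} = Real.sqrt 2 := by
  have hmem : Real.sqrt 2 ∈ {x : ℝ | ∃ D : Matrix (Fin 3) (Fin 3) ℝ, D.IsDiag ∧
      (∀ i, 0 < D i i) ∧ x = opNorm2 (D * Kmat * D⁻¹)} :=
    ⟨1, Matrix.isDiag_one, fun i => by simp, opNorm2_Kmat.symm⟩
  have hlb : ∀ x ∈ {x : ℝ | ∃ D : Matrix (Fin 3) (Fin 3) ℝ, D.IsDiag ∧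
      (∀ i, 0 < D i i) ∧ x = opNorm2 (D * Kmat * D⁻¹)}, Real.sqrt 2 ≤ x := by
    rintro x ⟨D, hD, hpos, rfl⟩
    exact lower D hD hpos
  exact le_antisymm (csInf_le ⟨Real.sqrt 2, hlb⟩ hmem) (le_csInf ⟨_, hmem⟩ hlb)
end
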